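/- arXiv:2004.00790 — 2 statements merged into one kernel-verified Lean document; each statement's English description precedes it below -/
import Mathlib

section
/- Let $T>0$ and let $\mathcal{H}$ be the space of $\boldsymbol{v} = (v_1,v_2,v_3): [0,T]\to\mathbb{R}^3$ with $\boldsymbol{v},\dot{\boldsymbol{v}}\in L^2(0,T;\mathbb{R}^3)$ and $v_1(0)=v_1(T)=v_2(0)=v_2(T)=0$, with norm $\|\boldsymbol{v}\|_{\mathcal{H}}^2 = \int_0^T(|\dot{\boldsymbol{v}}|^2 + |\boldsymbol{v}|^2)dt$. Let $A, M$ be constant real $3\times 3$ matrices with $M$ strictly positive definite with smallest eigenvalue $\lambda^*>0$, and suppose $\sup_{|x|=|y|=1}|x^\intercal A y|^2 \le \tfrac{c^*}{4}$ with $c^* < 16\lambda^*$. Then the bilinear form $b(\boldsymbol{v},\boldsymbol{w}) = \int_0^T(\dot{\boldsymbol{v}}\cdot\dot{\boldsymbol{w}} + \boldsymbol{v}\cdot A\dot{\boldsymbol{w}} + \boldsymbol{v}\cdot M\boldsymbol{w})dt$ is coercive on $\mathcal{H}$: there exists $C>0$ with $b(\boldsymbol{v},\boldsymbol{v}) \ge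 C\|\boldsymbol{v}\|_{\mathcal{H}}^2$ for all $\boldsymbol{v}\in\mathcal{H}$. In fact, for any $\epsilon$ with $\tfrac{c^*}{16\lambda^*} < \epsilon < 1$, $b(\boldsymbol{v},\boldsymbol{v}) \ge (1-\epsilon)\int_0^T|\dot{\boldsymbol{v}}|^2 dt + (\lambda^* - \tfrac{c^*}{16\epsilon})\int_0^T|\boldsymbol{v}|^2 dt$. -/
open Set

/-- Pure algebra: Young's inequality step. -/
lemma stmt17_alg (ε c X Y S : ℝ) (hε : 0 < ε) (hc : 0 ≤ c) (hX : 0 ≤ X) (hY : 0 ≤ Y)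
    (hS : S ^ 2 ≤ 4 * ε * c * (Y * X)) : -(ε * X + c * Y) ≤ S := by
  have hq : 0 ≤ ε * X + c * Y :=
    add_nonneg (mul_nonneg hε.le hX) (mul_nonneg hc hY)
  nlinarith [sq_nonneg (ε * X - c * Y), hq, hS]

/-- Lemma 5.11 (abstract version): coercivity of the bilinear form associated
with the hierarchical-game boundary value problem under `c* < 16 λ*`. -/
theorem stmt17 (T cs ls : ℝ) (hT : 0 < T) (hls : 0 < ls) (hcs : 0 ≤ cs)
    (A M : Matrix (Fin 3) (Fin 3) ℝ)
    (hM : ∀ x : Fin 3 → ℝ, ls * (∑ i, x i ^ 2) ≤ ∑ i, ∑ j, x i * M i j * x j)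
    (hA : ∀ x y : Fin 3 → ℝ,
      (∑ i, ∑ j, x i * A i j * y j) ^ 2 ≤ cs / 4 * (∑ i, x i ^ 2) * (∑ j, y j ^ 2))
    (hwi : cs < 16 * ls) :
    (∃ C > 0, ∀ (v v' : ℝ → Fin 3 → ℝ),
      (∀ t ∈ Icc (0:ℝ) T, HasDerivAt v (v' t) t) →
      ContinuousOn v' (Icc (0:ℝ) T) →
      v 0 0 = 0 → v T 0 = 0 → v 0 1 = 0 → v T 1 = 0 →
      C * (∫ t in (0:ℝ)..T, ((∑ i, v' t i ^ 2) + ∑ i, v t i ^ 2))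
        ≤ ∫ t in (0:ℝ)..T,
            ((∑ i, v' t i * v' t i) + (∑ i, ∑ j, v t i * A i j * v' t j)
              + (∑ i, ∑ j, v t i * M i j * v t j))) ∧
    (∀ ε : ℝ, cs / (16 * ls) < ε → ε < 1 →
      ∀ (v v' : ℝ → Fin 3 → ℝ),
      (∀ t ∈ Icc (0:ℝ) T, HasDerivAt v (v' t) t) →
      ContinuousOn v' (Icc (0:ℝ) T) →
      v 0 0 = 0 → v T 0 = 0 → v 0 1 = 0 → v T 1 = 0 →
      (1 - ε) * (∫ t in (0:ℝ)..T, ∑ i, v' t i ^ 2)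
          + (ls - cs / (16 * ε)) * (∫ t in (0:ℝ)..T, ∑ i, v t i ^ 2)
        ≤ ∫ t in (0:ℝ)..T,
            ((∑ i, v' t i * v' t i) + (∑ i, ∑ j, v t i * A i j * v' t j)
              + (∑ i, ∑ j, v t i * M i j * v t j))) := by
  have huIcc : uIcc (0:ℝ) T = Icc (0:ℝ) T := uIcc_of_le hT.le
  -- the key estimate, valid for any ε ∈ (0,∞)
  have key : ∀ ε : ℝ, 0 < ε → ∀ (v v' : ℝ → Fin 3 → ℝ),
      (∀ t ∈ Icc (0:ℝ) T, HasDerivAt v (v' t) t) →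
      ContinuousOn v' (Icc (0:ℝ) T) →
      (1 - ε) * (∫ t in (0:ℝ)..T, ∑ i, v' t i ^ 2)
          + (ls - cs / (16 * ε)) * (∫ t in (0:ℝ)..T, ∑ i, v t i ^ 2)
        ≤ ∫ t in (0:ℝ)..T,
            ((∑ i, v' t i * v' t i) + (∑ i, ∑ j, v t i * A i j * v' t j)
              + (∑ i, ∑ j, v t i * M i j * v t j)) := by
    intro ε hε v v' hd hc'
    have hvc : ContinuousOn v (Icc (0:ℝ) T) :=
      fun t ht => ((hd t ht).continuousAt).continuousWithinAt
    have hvi : ∀ i : Fin 3, ContinuousOn (fun t => v t i) (Icc (0:ℝ) T) :=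
      fun i => (continuous_apply i).comp_continuousOn hvc
    have hv'i : ∀ i : Fin 3, ContinuousOn (fun t => v' t i) (Icc (0:ℝ) T) :=
      fun i => (continuous_apply i).comp_continuousOn hc'
    have hcf1 : ContinuousOn (fun t => ∑ i, v' t i ^ 2) (Icc (0:ℝ) T) := by
      apply continuousOn_finset_sum; intro i _; exact (hv'i i).pow 2
    have hcf2 : ContinuousOn (fun t => ∑ i, v t i ^ 2) (Icc (0:ℝ) T) := by
      apply continuousOn_finset_sum; intro i _; exact (hvi i).pow 2
    have hcg : ContinuousOn (fun t =>
        (∑ i, v' t i * v' t i) + (∑ i, ∑ j, v t i * A i j * v' t j)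
          + (∑ i, ∑ j, v t i * M i j * v t j)) (Icc (0:ℝ) T) := by
      apply ContinuousOn.add
      apply ContinuousOn.add
      · apply continuousOn_finset_sum; intro i _; exact (hv'i i).mul (hv'i i)
      · apply continuousOn_finset_sum; intro i _
        apply continuousOn_finset_sum; intro j _
        exact ((hvi i).mul continuousOn_const).mul (hv'i j)
      · apply continuousOn_finset_sum; intro i _
        apply continuousOn_finset_sum; intro j _
        exact ((hvi i).mul continuousOn_const).mul (hvi j)
    have hif1 : IntervalIntegrable (fun t => ∑ i, v' t i ^ 2) MeasureTheory.volume 0 T :=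
      (huIcc ▸ hcf1).intervalIntegrable
    have hif2 : IntervalIntegrable (fun t => ∑ i, v t i ^ 2) MeasureTheory.volume 0 T :=
      (huIcc ▸ hcf2).intervalIntegrable
    have hig : IntervalIntegrable (fun t =>
        (∑ i, v' t i * v' t i) + (∑ i, ∑ j, v t i * A i j * v' t j)
          + (∑ i, ∑ j, v t i * M i j * v t j)) MeasureTheory.volume 0 T :=
      (huIcc ▸ hcg).intervalIntegrable
    have hsplit :
        (1 - ε) * (∫ t in (0:ℝ)..T, ∑ i, v' t i ^ 2)
            + (ls - cs / (16 * ε)) * (∫ t in (0:ℝ)..T, ∑ i, v t i ^ 2)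
          = ∫ t in (0:ℝ)..T,
              ((1 - ε) * (∑ i, v' t i ^ 2) + (ls - cs / (16 * ε)) * (∑ i, v t i ^ 2)) := by
      rw [intervalIntegral.integral_add (hif1.const_mul _) (hif2.const_mul _),
        intervalIntegral.integral_const_mul, intervalIntegral.integral_const_mul]
    rw [hsplit]
    apply intervalIntegral.integral_mono_on hT.le
      ((hif1.const_mul _).add (hif2.const_mul _)) hig
    intro t ht
    have hAx := hA (v t) (v' t)
    have hMx := hM (v t)
    have hX : (0:ℝ) ≤ ∑ i, v' t i ^ 2 := Finset.sum_nonneg fun i _ => sq_nonneg _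
    have hY : (0:ℝ) ≤ ∑ i, v t i ^ 2 := Finset.sum_nonneg fun i _ => sq_nonneg _
    have hcdiv : (0:ℝ) ≤ cs / (16 * ε) := by positivity
    have h4 : 4 * ε * (cs / (16 * ε)) = cs / 4 := by
      field_simp; ring
    have hS : (∑ i, ∑ j, v t i * A i j * v' t j) ^ 2
        ≤ 4 * ε * (cs / (16 * ε)) * ((∑ i, v t i ^ 2) * (∑ i, v' t i ^ 2)) := by
      rw [h4]; nlinarith [hAx]
    have hyoung := stmt17_alg ε (cs / (16 * ε)) (∑ i, v' t i ^ 2) (∑ i, v t i ^ 2)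
      (∑ i, ∑ j, v t i * A i j * v' t j) hε hcdiv hX hY hS
    have hsq : (∑ i, v' t i * v' t i) = ∑ i, v' t i ^ 2 := by
      apply Finset.sum_congr rfl; intro i _; ring
    rw [hsq]
    linarith
  constructor
  · -- part 1: choose ε₀ and C
    set ε₀ : ℝ := (cs / (16 * ls) + 1) / 2 with hε₀def
    have hq : cs / (16 * ls) < 1 := by
      rw [div_lt_one (by linarith)]; exact hwi
    have hq0 : 0 ≤ cs / (16 * ls) := by positivity
    have hε₀pos : 0 < ε₀ := by rw [hε₀def]; linarith
    have hε₀lt : ε₀ < 1 := by rw [hε₀def]; linarith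
    have hgt : cs / (16 * ls) < ε₀ := by rw [hε₀def]; linarith
    have hpos2 : 0 < ls - cs / (16 * ε₀) := by
      have : cs / (16 * ε₀) < ls := by
        rw [div_lt_iff₀ (by linarith)]
        have := (div_lt_iff₀ (by linarith : (0:ℝ) < 16 * ls)).mp hgt
        linarith
      linarith
    refine ⟨min (1 - ε₀) (ls - cs / (16 * ε₀)), lt_min (by linarith) hpos2, ?_⟩
    intro v v' hd hc' _ _ _ _
    have hvc : ContinuousOn v (Icc (0:ℝ) T) :=
      fun t ht => ((hd t ht).continuousAt).continuousWithinAt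
    have hcf1 : ContinuousOn (fun t => ∑ i, v' t i ^ 2) (Icc (0:ℝ) T) := by
      apply continuousOn_finset_sum; intro i _
      exact ((continuous_apply i).comp_continuousOn hc').pow 2
    have hcf2 : ContinuousOn (fun t => ∑ i, v t i ^ 2) (Icc (0:ℝ) T) := by
      apply continuousOn_finset_sum; intro i _
      exact ((continuous_apply i).comp_continuousOn hvc).pow 2
    have hif1 : IntervalIntegrable (fun t => ∑ i, v' t i ^ 2) MeasureTheory.volume 0 T :=
      (huIcc ▸ hcf1).intervalIntegrable
    have hif2 : IntervalIntegrable (fun t => ∑ i, v t i ^ 2) MeasureTheory.volume 0 T :=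
      (huIcc ▸ hcf2).intervalIntegrable
    have hI1 : (0:ℝ) ≤ ∫ t in (0:ℝ)..T, ∑ i, v' t i ^ 2 :=
      intervalIntegral.integral_nonneg hT.le
        (fun t _ => Finset.sum_nonneg fun i _ => sq_nonneg _)
    have hI2 : (0:ℝ) ≤ ∫ t in (0:ℝ)..T, ∑ i, v t i ^ 2 :=
      intervalIntegral.integral_nonneg hT.le
        (fun t _ => Finset.sum_nonneg fun i _ => sq_nonneg _)
    have hIsum : (∫ t in (0:ℝ)..T, ((∑ i, v' t i ^ 2) + ∑ i, v t i ^ 2))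
        = (∫ t in (0:ℝ)..T, ∑ i, v' t i ^ 2) + ∫ t in (0:ℝ)..T, ∑ i, v t i ^ 2 :=
      intervalIntegral.integral_add hif1 hif2
    have hk := key ε₀ hε₀pos v v' hd hc'
    have h1 : min (1 - ε₀) (ls - cs / (16 * ε₀)) * (∫ t in (0:ℝ)..T, ∑ i, v' t i ^ 2)
        ≤ (1 - ε₀) * (∫ t in (0:ℝ)..T, ∑ i, v' t i ^ 2) :=
      mul_le_mul_of_nonneg_right (min_le_left _ _) hI1
    have h2 : min (1 - ε₀) (ls - cs / (16 * ε₀)) * (∫ t in (0:ℝ)..T, ∑ i, v t i ^ 2)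
        ≤ (ls - cs / (16 * ε₀)) * (∫ t in (0:ℝ)..T, ∑ i, v t i ^ 2) :=
      mul_le_mul_of_nonneg_right (min_le_right _ _) hI2
    rw [hIsum, mul_add]
    linarith
  · intro ε hε1 _ v v' hd hc' _ _ _ _
    have hεpos : 0 < ε := lt_of_le_of_lt (by positivity) hε1
    exact key ε hεpos v v' hd hc'
end

section
/- Let $T>0$ and let $\boldsymbol{K}, \boldsymbol{\Sigma}: [0,T]\to\mathbb{R}^{N\times N}$ be continuous maps into symmetric positive definite matrices with $\boldsymbol{K}_t \ge 2\underline\kappa I$ and $\boldsymbol{\Sigma}_t - \tfrac1N\boldsymbol{\beta}_t \ge c_2 I$ for constants $\underline\kappa, c_2 > 0$, and $\boldsymbol{C}:[0,T]\to\mathbb{R}^{N\times N}$ continuous with the property that for all vectors $x,y\in\mathbb{R}^N$ and $t$, $|x^\intercal\boldsymbol{C}_t y| \le \tfrac{a^2}{2}\,y^\intercal\boldsymbol{K}_t^{-2}y + \tfrac{1}{2a^2}x^\intercal\boldsymbol{\Lambda}_t x$ where $x^\intercal(\boldsymbol{K}_t^{-1} - \tfrac{a^2}{2}\boldsymbol{K}_t^{-2})x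 \ge c_1|x|^2$ and $\boldsymbol{\Sigma}_t - \tfrac1N\boldsymbol\beta_t - \tfrac{1}{2a^2}\boldsymbol\Lambda_t \ge c_2 I$ for some $a, c_1, c_2 > 0$. Suppose $(\boldsymbol{q},\boldsymbol{x})$ and $(\boldsymbol{q}',\boldsymbol{x}')$ are two $C^1$ solutions of the two-point boundary value problem $\dot{\boldsymbol{q}} = \boldsymbol{K}_t^{-1}\boldsymbol{x}$, $-\dot{\boldsymbol{x}} = \boldsymbol{C}_t\boldsymbol{x} - (\boldsymbol{\Sigma}_t - \tfrac1N\boldsymbol\beta_t)\boldsymbol{q} + \boldsymbol{\mu}_t$, with $\boldsymbol{q}(0) = \boldsymbol{q}_0$, $\boldsymbol{q}(T) = 0$. Then $\boldsymbol{q} \equiv \boldsymbol{q}'$ and $\boldsymbol{x}\equiv\boldsymbol{x}'$. -/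
open Set Matrix

private lemma hasDerivAt_dotProd {n : ℕ} {u v : ℝ → Fin n → ℝ} {u' v' : Fin n → ℝ} {t : ℝ}
    (hu : HasDerivAt u u' t) (hv : HasDerivAt v v' t) :
    HasDerivAt (fun s => u s ⬝ᵥ v s) (u' ⬝ᵥ v t + u t ⬝ᵥ v') t := by
  have h : ∀ i ∈ Finset.univ, HasDerivAt (fun s => u s i * v s i)
      (u' i * v t i + u t i * v' i) t :=
    fun i _ => (hasDerivAt_pi.mp hu i).mul (hasDerivAt_pi.mp hv i)
  have h2 := HasDerivAt.fun_sum h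
  simpa [dotProduct, Finset.sum_add_distrib, Finset.mul_sum] using h2

private lemma contOn_dot {n : ℕ} {s : Set ℝ} {u v : ℝ → Fin n → ℝ}
    (hu : ∀ i, ContinuousOn (fun t => u t i) s)
    (hv : ∀ i, ContinuousOn (fun t => v t i) s) :
    ContinuousOn (fun t => u t ⬝ᵥ v t) s := by
  simp only [dotProduct]
  exact continuousOn_finset_sum _ fun i _ => (hu i).mul (hv i)

/-- Deterministic uniqueness lemma for the constrained Nash equilibrium
two-point boundary value problem. -/
theorem stmt19 (T : ℝ) (hT : 0 < T) (N : ℕ) (hN : 1 ≤ N)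
    (K Sg C Λm β : ℝ → Matrix (Fin N) (Fin N) ℝ)
    (μ : ℝ → Fin N → ℝ)
    (hKc : ∀ i j, Continuous fun t => K t i j)
    (hSgc : ∀ i j, Continuous fun t => Sg t i j)
    (hCc : ∀ i j, Continuous fun t => C t i j)
    (hβc : ∀ i j, Continuous fun t => β t i j)
    (hμc : ∀ i, Continuous fun t => μ t i)
    (uk a c1 c2 : ℝ) (huk : 0 < uk) (ha : 0 < a) (hc1 : 0 < c1) (hc2 : 0 < c2)
    (hKpd : ∀ t ∈ Icc (0:ℝ) T, (K t).PosDef)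
    (hSgpd : ∀ t ∈ Icc (0:ℝ) T, (Sg t).PosDef)
    (hKlb : ∀ t ∈ Icc (0:ℝ) T, ∀ v : Fin N → ℝ,
      2 * uk * (∑ i, v i ^ 2) ≤ v ⬝ᵥ (K t).mulVec v)
    (hSglb : ∀ t ∈ Icc (0:ℝ) T, ∀ v : Fin N → ℝ,
      c2 * (∑ i, v i ^ 2) ≤ v ⬝ᵥ ((Sg t - ((1:ℝ)/(N:ℝ)) • β t).mulVec v))
    (hCbd : ∀ t ∈ Icc (0:ℝ) T, ∀ v w : Fin N → ℝ,
      |v ⬝ᵥ (C t).mulVec w| ≤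
        a ^ 2 / 2 * (w ⬝ᵥ ((K t)⁻¹ * (K t)⁻¹).mulVec w)
          + 1 / (2 * a ^ 2) * (v ⬝ᵥ (Λm t).mulVec v))
    (hc1b : ∀ t ∈ Icc (0:ℝ) T, ∀ v : Fin N → ℝ,
      c1 * (∑ i, v i ^ 2) ≤
        v ⬝ᵥ (((K t)⁻¹ - (a ^ 2 / 2) • ((K t)⁻¹ * (K t)⁻¹)).mulVec v))
    (hc2b : ∀ t ∈ Icc (0:ℝ) T, ∀ v : Fin N → ℝ,
      c2 * (∑ i, v i ^ 2) ≤
        v ⬝ᵥ ((Sg t - ((1:ℝ)/(N:ℝ)) • β t - (1 / (2 * a ^ 2)) • Λm t).mulVec v))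
    (q x q2 x2 : ℝ → Fin N → ℝ) (q0 : Fin N → ℝ)
    (hq : ∀ t ∈ Icc (0:ℝ) T, HasDerivAt q (((K t)⁻¹).mulVec (x t)) t)
    (hx : ∀ t ∈ Icc (0:ℝ) T, HasDerivAt x
      (-((C t).mulVec (x t)) + (Sg t - ((1:ℝ)/(N:ℝ)) • β t).mulVec (q t) - μ t) t)
    (hq2 : ∀ t ∈ Icc (0:ℝ) T, HasDerivAt q2 (((K t)⁻¹).mulVec (x2 t)) t)
    (hx2 : ∀ t ∈ Icc (0:ℝ) T, HasDerivAt x2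
      (-((C t).mulVec (x2 t)) + (Sg t - ((1:ℝ)/(N:ℝ)) • β t).mulVec (q2 t) - μ t) t)
    (hq0 : q 0 = q0) (hqT : q T = 0) (hq20 : q2 0 = q0) (hq2T : q2 T = 0) :
    EqOn q q2 (Icc (0:ℝ) T) ∧ EqOn x x2 (Icc (0:ℝ) T) := by
  have hTle : (0:ℝ) ≤ T := hT.le
  -- abbreviations
  set dq : ℝ → Fin N → ℝ := fun t => q t - q2 t with hdq
  set dx : ℝ → Fin N → ℝ := fun t => x t - x2 t with hdx
  set g : ℝ → ℝ := fun t => dq t ⬝ᵥ dx t with hg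
  set g' : ℝ → ℝ := fun t =>
    (((K t)⁻¹).mulVec (dx t)) ⬝ᵥ dx t
      + dq t ⬝ᵥ (-((C t).mulVec (dx t))
          + (Sg t - ((1:ℝ)/(N:ℝ)) • β t).mulVec (dq t)) with hg'
  set φ : ℝ → ℝ := fun t => c1 * ∑ i, dx t i ^ 2 + c2 * ∑ i, dq t i ^ 2 with hφ
  -- derivative of g
  have hderiv : ∀ t ∈ Icc (0:ℝ) T, HasDerivAt g (g' t) t := by
    intro t ht
    have hdq' : HasDerivAt dq (((K t)⁻¹).mulVec (dx t)) t := by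
      have h := (hq t ht).sub (hq2 t ht)
      rw [hdq]
      refine h.congr_deriv ?_
      simp [hdx, Matrix.mulVec_sub]
    have hdx' : HasDerivAt dx
        (-((C t).mulVec (dx t))
          + (Sg t - ((1:ℝ)/(N:ℝ)) • β t).mulVec (dq t)) t := by
      have h := (hx t ht).sub (hx2 t ht)
      rw [hdx]
      refine h.congr_deriv ?_
      simp only [hdx, hdq, Matrix.mulVec_sub]
      abel
    exact hasDerivAt_dotProd hdq' hdx'
  -- continuity facts
  have hqcOn : ContinuousOn q (Icc (0:ℝ) T) :=
    fun t ht => (hq t ht).continuousAt.continuousWithinAt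
  have hq2cOn : ContinuousOn q2 (Icc (0:ℝ) T) :=
    fun t ht => (hq2 t ht).continuousAt.continuousWithinAt
  have hxcOn : ContinuousOn x (Icc (0:ℝ) T) :=
    fun t ht => (hx t ht).continuousAt.continuousWithinAt
  have hx2cOn : ContinuousOn x2 (Icc (0:ℝ) T) :=
    fun t ht => (hx2 t ht).continuousAt.continuousWithinAt
  have hdqc : ∀ i, ContinuousOn (fun t => dq t i) (Icc (0:ℝ) T) := by
    intro i
    exact (continuous_apply i).comp_continuousOn (hqcOn.sub hq2cOn)
  have hdxc : ∀ i, ContinuousOn (fun t => dx t i) (Icc (0:ℝ) T) := by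
    intro i
    exact (continuous_apply i).comp_continuousOn (hxcOn.sub hx2cOn)
  have hKcont : Continuous K := continuous_matrix hKc
  have hdet : Continuous fun t => (K t).det := hKcont.matrix_det
  have hadj : Continuous fun t => (K t).adjugate := hKcont.matrix_adjugate
  have hdetne : ∀ t ∈ Icc (0:ℝ) T, (K t).det ≠ 0 :=
    fun t ht => (hKpd t ht).det_pos.ne'
  have hKinvc : ∀ i j, ContinuousOn (fun t => (K t)⁻¹ i j) (Icc (0:ℝ) T) := by
    intro i j
    have hc : ContinuousOn (fun t => ((K t).det)⁻¹ * (K t).adjugate i j)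
        (Icc (0:ℝ) T) :=
      (hdet.continuousOn.inv₀ hdetne).mul (hadj.matrix_elem i j).continuousOn
    apply hc.congr
    intro t ht
    show (K t)⁻¹ i j = ((K t).det)⁻¹ * (K t).adjugate i j
    rw [Matrix.inv_def, Ring.inverse_eq_inv]
    simp [smul_eq_mul]
  have hKinv2c : ∀ i j,
      ContinuousOn (fun t => ((K t)⁻¹ * (K t)⁻¹) i j) (Icc (0:ℝ) T) := by
    intro i j
    simp only [Matrix.mul_apply]
    exact continuousOn_finset_sum _ fun k _ => (hKinvc i k).mul (hKinvc k j)
  have hmulVec : ∀ (A : ℝ → Matrix (Fin N) (Fin N) ℝ) (w : ℝ → Fin N → ℝ),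
      (∀ i j, ContinuousOn (fun t => A t i j) (Icc (0:ℝ) T)) →
      (∀ j, ContinuousOn (fun t => w t j) (Icc (0:ℝ) T)) →
      ∀ i, ContinuousOn (fun t => (A t).mulVec (w t) i) (Icc (0:ℝ) T) := by
    intro A w hA hw i
    simp only [Matrix.mulVec, dotProduct]
    exact continuousOn_finset_sum _ fun j _ => (hA i j).mul (hw j)
  have hScOn : ∀ i j,
      ContinuousOn (fun t => (Sg t - ((1:ℝ)/(N:ℝ)) • β t) i j) (Icc (0:ℝ) T) := by
    intro i j
    have : Continuous fun t => Sg t i j - ((1:ℝ)/(N:ℝ)) * β t i j :=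
      (hSgc i j).sub (continuous_const.mul (hβc i j))
    exact this.continuousOn
  have hg'c : ContinuousOn g' (Icc (0:ℝ) T) := by
    rw [hg']
    apply ContinuousOn.add
    · exact contOn_dot (hmulVec _ _ hKinvc hdxc) hdxc
    · apply contOn_dot hdqc
      intro i
      have h1 := hmulVec C dx (fun i j => (hCc i j).continuousOn) hdxc i
      have h2 := hmulVec _ dq hScOn hdqc i
      exact h1.neg.add h2
  have hφc : ContinuousOn φ (Icc (0:ℝ) T) := by
    rw [hφ]
    apply ContinuousOn.add
    · exact continuousOn_const.mul
        (continuousOn_finset_sum _ fun i _ => (hdxc i).pow 2)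
    · exact continuousOn_const.mul
        (continuousOn_finset_sum _ fun i _ => (hdqc i).pow 2)
  -- pointwise bound φ ≤ g'
  have hbound : ∀ t ∈ Icc (0:ℝ) T, φ t ≤ g' t := by
    intro t ht
    have h1 := hc1b t ht (dx t)
    have h2 := hc2b t ht (dq t)
    have h3 := hCbd t ht (dq t) (dx t)
    rw [Matrix.sub_mulVec, Matrix.smul_mulVec, dotProduct_sub,
      dotProduct_smul, smul_eq_mul] at h1
    rw [Matrix.sub_mulVec, Matrix.smul_mulVec, dotProduct_sub,
      dotProduct_smul, smul_eq_mul] at h2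
    have habs := le_abs_self (dq t ⬝ᵥ (C t).mulVec (dx t))
    have hgeq : g' t = dx t ⬝ᵥ ((K t)⁻¹).mulVec (dx t)
        - dq t ⬝ᵥ (C t).mulVec (dx t)
        + dq t ⬝ᵥ (Sg t - ((1:ℝ)/(N:ℝ)) • β t).mulVec (dq t) := by
      simp only [hg']
      rw [dotProduct_comm (((K t)⁻¹).mulVec (dx t)) (dx t)]
      rw [dotProduct_add, dotProduct_neg]
      ring
    rw [hgeq]
    simp only [hφ]
    linarith
  -- FTC and integral comparison
  have hg'int : IntervalIntegrable g' MeasureTheory.volume 0 T := by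
    apply ContinuousOn.intervalIntegrable
    rwa [uIcc_of_le hTle]
  have hφint : IntervalIntegrable φ MeasureTheory.volume 0 T := by
    apply ContinuousOn.intervalIntegrable
    rwa [uIcc_of_le hTle]
  have hFTC : ∫ s in (0:ℝ)..T, g' s = g T - g 0 :=
    intervalIntegral.integral_eq_sub_of_hasDerivAt
      (fun s hs => hderiv s (by rwa [uIcc_of_le hTle] at hs)) hg'int
  have hgT : g T = 0 := by
    rw [hg]; simp [hdq, hqT, hq2T]
  have hg0 : g 0 = 0 := by
    rw [hg]; simp [hdq, hq0, hq20]
  have hmono : ∫ s in (0:ℝ)..T, φ s ≤ ∫ s in (0:ℝ)..T, g' s :=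
    intervalIntegral.integral_mono_on hTle hφint hg'int hbound
  have hintle : ∫ s in (0:ℝ)..T, φ s ≤ 0 := by
    rw [hFTC, hgT, hg0] at hmono; linarith
  have hφnn : ∀ s ∈ Icc (0:ℝ) T, 0 ≤ φ s := by
    intro s _
    rw [hφ]
    have h1 : (0:ℝ) ≤ ∑ i, dx s i ^ 2 :=
      Finset.sum_nonneg fun i _ => sq_nonneg _
    have h2 : (0:ℝ) ≤ ∑ i, dq s i ^ 2 :=
      Finset.sum_nonneg fun i _ => sq_nonneg _
    positivity
  -- φ vanishes on [0,T]
  have hφ0 : ∀ t ∈ Icc (0:ℝ) T, φ t = 0 := by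
    intro t ht
    by_contra hne
    have hpos : 0 < φ t := lt_of_le_of_ne (hφnn t ht) (Ne.symm hne)
    have := intervalIntegral.integral_pos hT hφc
      (fun s hs => hφnn s ⟨hs.1.le, hs.2⟩) ⟨t, ht, hpos⟩
    linarith
  -- extract componentwise vanishing
  have hzero : ∀ t ∈ Icc (0:ℝ) T, (∀ i, dq t i = 0) ∧ (∀ i, dx t i = 0) := by
    intro t ht
    have h := hφ0 t ht
    simp only [hφ] at h
    have h1 : (0:ℝ) ≤ ∑ i, dx t i ^ 2 :=
      Finset.sum_nonneg fun i _ => sq_nonneg _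
    have h2 : (0:ℝ) ≤ ∑ i, dq t i ^ 2 :=
      Finset.sum_nonneg fun i _ => sq_nonneg _
    have hx0 : ∑ i, dx t i ^ 2 = 0 := by
      by_contra hne
      have hpos : 0 < ∑ i, dx t i ^ 2 := lt_of_le_of_ne h1 (Ne.symm hne)
      nlinarith [mul_pos hc1 hpos, mul_nonneg hc2.le h2]
    have hq0' : ∑ i, dq t i ^ 2 = 0 := by
      by_contra hne
      have hpos : 0 < ∑ i, dq t i ^ 2 := lt_of_le_of_ne h2 (Ne.symm hne)
      nlinarith [mul_pos hc2 hpos, mul_nonneg hc1.le h1]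
    constructor
    · intro i
      have := (Finset.sum_eq_zero_iff_of_nonneg
        (fun i _ => sq_nonneg (dq t i))).mp hq0' i (Finset.mem_univ i)
      exact pow_eq_zero_iff (two_ne_zero) |>.mp this
    · intro i
      have := (Finset.sum_eq_zero_iff_of_nonneg
        (fun i _ => sq_nonneg (dx t i))).mp hx0 i (Finset.mem_univ i)
      exact pow_eq_zero_iff (two_ne_zero) |>.mp this
  constructor
  · intro t ht
    funext i
    have h := (hzero t ht).1 i
    have : q t i - q2 t i = 0 := by simpa [hdq, Pi.sub_apply] using h
    linarith
  · intro t ht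
    funext i
    have h := (hzero t ht).2 i
    have : x t i - x2 t i = 0 := by simpa [hdx, Pi.sub_apply] using h
    linarith
end
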